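/- arXiv:2301.07537 — 4 statements merged into one kernel-verified Lean document; each statement's English description precedes it below -/
import Mathlib

section
/- Let T be an undirected tree on t ≥ 2 vertices with positive vertex weights w, such that every edge {a,b} of T satisfies min(w_a,w_b) ≥ (1−ε)·max(w_a,w_b) for some 0 ≤ ε ≤ 1/2. Then, orienting each edge {a,b} with w_a ≤ w_b as (a,b), we have Σ_{(a,b)∈E(T)} w_a ≥ ((t−1)(1−ε)/(t−ε)) · Σ_{v∈V(T)} w_v. -/
theorem stmt_3 {V : Type*} [Fintype V] [DecidableEq V]
    (G : SimpleGraph V) [DecidableRel G.Adj]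
    (hconn : G.Connected) (hacyc : G.IsAcyclic)
    (t : ℕ) (ht : Fintype.card V = t) (ht2 : 2 ≤ t)
    (w : V → ℝ) (hw : ∀ v, 0 < w v)
    (ε : ℝ) (hε0 : 0 ≤ ε) (hε1 : ε ≤ 1 / 2)
    (hedge : ∀ a b, G.Adj a b → (1 - ε) * max (w a) (w b) ≤ min (w a) (w b)) :
    ∑ e ∈ G.edgeFinset,
        Sym2.lift ⟨fun a b => min (w a) (w b), fun a b => min_comm _ _⟩ e
      ≥ (((t : ℝ) - 1) * (1 - ε) / ((t : ℝ) - ε)) * ∑ v, w v := by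
  classical
  have hne : Nonempty V := Fintype.card_pos_iff.mp (by omega)
  set mfun : Sym2 V → ℝ :=
    Sym2.lift ⟨fun a b => min (w a) (w b), fun a b => min_comm _ _⟩ with hmfun
  -- minimum weight vertex
  obtain ⟨μ, -, hμ⟩ := Finset.exists_min_image Finset.univ w
    ⟨Classical.arbitrary V, Finset.mem_univ _⟩
  have hμ' : ∀ v : V, w μ ≤ w v := fun v => hμ v (Finset.mem_univ v)
  -- parent function towards μ
  have hpar : ∀ v : V, v ≠ μ → ∃ x, G.Adj v x ∧ G.dist x μ + 1 = G.dist v μ := by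
    intro v hv
    obtain ⟨p, hp⟩ := hconn.exists_walk_length_eq_dist v μ
    cases p with
    | nil => exact absurd rfl hv
    | @cons _ x _ h q =>
      refine ⟨x, h, ?_⟩
      have h1 : G.dist x μ ≤ q.length := SimpleGraph.dist_le q
      obtain ⟨r, hr⟩ := q.reachable.exists_walk_length_eq_dist
      have h2 : G.dist v μ ≤ G.dist x μ + 1 := by
        have := SimpleGraph.dist_le (SimpleGraph.Walk.cons h r)
        simpa [hr] using this
      simp only [SimpleGraph.Walk.length_cons] at hp
      omega
  have hpar' : ∀ v : V, ∃ x, v ≠ μ → G.Adj v x ∧ G.dist x μ + 1 = G.dist v μ := by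
    intro v
    by_cases hv : v = μ
    · exact ⟨v, fun h => absurd hv h⟩
    · obtain ⟨x, h1, h2⟩ := hpar v hv
      exact ⟨x, fun _ => ⟨h1, h2⟩⟩
  choose f hf using hpar'
  -- (A) : edge count
  have htree : G.IsTree := ⟨hconn, hacyc⟩
  have hcard : G.edgeFinset.card + 1 = t := by rw [← ht]; exact htree.card_edgeFinset
  have hA : ((t : ℝ) - 1) * w μ ≤ ∑ e ∈ G.edgeFinset, mfun e := by
    have hterm : ∀ e ∈ G.edgeFinset, w μ ≤ mfun e := by
      intro e he
      induction e using Sym2.ind with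
      | _ a b => simpa [hmfun, le_min_iff] using ⟨hμ' a, hμ' b⟩
    have := Finset.card_nsmul_le_sum G.edgeFinset mfun (w μ) hterm
    have hc : ((G.edgeFinset.card : ℝ)) = (t : ℝ) - 1 := by
      have : (G.edgeFinset.card : ℝ) + 1 = (t : ℝ) := by exact_mod_cast hcard
      linarith
    calc ((t : ℝ) - 1) * w μ = (G.edgeFinset.card : ℝ) * w μ := by rw [hc]
      _ = G.edgeFinset.card • w μ := by simp [nsmul_eq_mul]
      _ ≤ ∑ e ∈ G.edgeFinset, mfun e := this
  -- (B)
  have hB : (1 - ε) * ((∑ v, w v) - w μ) ≤ ∑ e ∈ G.edgeFinset, mfun e := by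
    have hinj : Set.InjOn (fun v => s(v, f v)) (Finset.univ.erase μ) := by
      intro u hu v hv h
      have hu' : u ≠ μ := Finset.ne_of_mem_erase hu
      have hv' : v ≠ μ := Finset.ne_of_mem_erase hv
      simp only [Sym2.eq_iff] at h
      rcases h with ⟨h1, -⟩ | ⟨h1, h2⟩
      · exact h1
      · exfalso
        have d1 := (hf u hu').2
        have d2 := (hf v hv').2
        rw [← h1] at d2
        rw [h2] at d1
        omega
    have hsub : (Finset.univ.erase μ).image (fun v => s(v, f v)) ⊆ G.edgeFinset := by
      intro e he
      obtain ⟨v, hv, rfl⟩ := Finset.mem_image.mp he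
      have hv' : v ≠ μ := Finset.ne_of_mem_erase hv
      exact SimpleGraph.mem_edgeFinset.mpr ((hf v hv').1)
    have h1 : ∑ v ∈ Finset.univ.erase μ, (1 - ε) * w v
        ≤ ∑ v ∈ Finset.univ.erase μ, mfun s(v, f v) := by
      apply Finset.sum_le_sum
      intro v hv
      have hv' : v ≠ μ := Finset.ne_of_mem_erase hv
      have hadj := (hf v hv').1
      have hmax : (1 - ε) * w v ≤ (1 - ε) * max (w v) (w (f v)) := by
        apply mul_le_mul_of_nonneg_left (le_max_left _ _) (by linarith)
      calc (1 - ε) * w v ≤ (1 - ε) * max (w v) (w (f v)) := hmax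
        _ ≤ min (w v) (w (f v)) := hedge v (f v) hadj
        _ = mfun s(v, f v) := by simp [hmfun]
    have h2 : ∑ v ∈ Finset.univ.erase μ, mfun s(v, f v)
        = ∑ e ∈ (Finset.univ.erase μ).image (fun v => s(v, f v)), mfun e :=
      (Finset.sum_image (fun u hu v hv h => hinj hu hv h)).symm
    have h3 : ∑ e ∈ (Finset.univ.erase μ).image (fun v => s(v, f v)), mfun e
        ≤ ∑ e ∈ G.edgeFinset, mfun e := by
      apply Finset.sum_le_sum_of_subset_of_nonneg hsub
      intro e he _
      induction e using Sym2.ind with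
      | _ a b => simp only [hmfun, Sym2.lift_mk]; exact le_min (hw a).le (hw b).le
    have h4 : ∑ v ∈ Finset.univ.erase μ, (1 - ε) * w v
        = (1 - ε) * ((∑ v, w v) - w μ) := by
      rw [← Finset.mul_sum, Finset.sum_erase_eq_sub (Finset.mem_univ μ)]
    linarith
  -- combine
  have ht2' : (2 : ℝ) ≤ (t : ℝ) := by exact_mod_cast ht2
  have htε : (0 : ℝ) < (t : ℝ) - ε := by linarith
  rw [ge_iff_le, div_mul_eq_mul_div, div_le_iff₀ htε]
  have c1 : (0 : ℝ) ≤ (t : ℝ) - 1 := by linarith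
  have c2 : (0 : ℝ) ≤ 1 - ε := by linarith
  nlinarith [mul_le_mul_of_nonneg_left hB c1, mul_le_mul_of_nonneg_left hA c2]
end

section
/- Let 0 ≤ δ ≤ ε < 1, let n ≥ 1 be an integer, and let α_1,…,α_n and β be real numbers with β ≥ (Σ_{i=1}^n α_i² − 1)/(1−ε). Then Σ_{i=1}^n (1−α_i)² + (ε−δ)β ≥ n(ε−δ)/(1−δ) − (ε−δ)/(1−ε). -/
theorem stmt_7 (ε δ : ℝ) (hδ0 : 0 ≤ δ) (hδε : δ ≤ ε) (hε1 : ε < 1)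
    (n : ℕ) (hn : 1 ≤ n) (α : Fin n → ℝ) (β : ℝ)
    (hβ : β ≥ ((∑ i, (α i) ^ 2) - 1) / (1 - ε)) :
    ∑ i, (1 - α i) ^ 2 + (ε - δ) * β
      ≥ (n : ℝ) * (ε - δ) / (1 - δ) - (ε - δ) / (1 - ε) := by
  have hε : (0:ℝ) < 1 - ε := by linarith
  have hδ : (0:ℝ) < 1 - δ := by linarith
  have hεδ : (0:ℝ) ≤ ε - δ := by linarith
  set S := ∑ i, α i with hS
  set Q := ∑ i, (α i) ^ 2 with hQdef
  have hn' : (0:ℝ) < n := by exact_mod_cast hn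
  have hCS : S ^ 2 ≤ (n : ℝ) * Q := by
    have := sq_sum_le_card_mul_sum_sq (s := Finset.univ) (f := α)
    simpa [hS, hQdef] using this
  have hβ' : β * (1 - ε) ≥ Q - 1 := by
    have := (div_le_iff₀ hε).mp hβ
    linarith
  have hsum : ∑ i, (1 - α i) ^ 2 = (n : ℝ) - 2 * S + Q := by
    have h1 : ∀ i, (1 - α i) ^ 2 = 1 - 2 * α i + α i ^ 2 := fun i => by ring
    simp_rw [h1]
    rw [Finset.sum_add_distrib, Finset.sum_sub_distrib, Finset.sum_const, ← Finset.mul_sum,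
      ← hS, ← hQdef]
    simp
  rw [hsum, ge_iff_le, div_sub_div _ _ (ne_of_gt hδ) (ne_of_gt hε), div_le_iff₀ (by positivity)]
  have key : 0 ≤ ((1 - δ) * S - (n:ℝ) * (1 - ε)) ^ 2 := sq_nonneg _
  have hb : (ε - δ) * (Q - 1) ≤ (ε - δ) * (β * (1 - ε)) :=
    mul_le_mul_of_nonneg_left (by linarith) hεδ
  nlinarith [mul_le_mul_of_nonneg_right hCS (le_of_lt hδ), sq_nonneg S,
    mul_pos hδ hε, mul_le_mul_of_nonneg_right hb (le_of_lt hδ)]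
end

section
/- Let 0 ≤ δ ≤ ε < 1, n ≥ 0 an integer, and let α_1,…,α_n, β, γ be reals with 0 ≤ γ ≤ 1 and β ≥ (Σα_i² − 1 − γ²)/(1−ε). Then Σ_{i=1}^n (1−α_i)² + (ε−δ)β + γ ≥ ρ_n + (1 − (ε−δ)/(1−ε))·γ, where ρ_n = n(ε−δ)/(1−δ) − (ε−δ)/(1−ε). -/
theorem stmt_14 (ε δ : ℝ) (hδ0 : 0 ≤ δ) (hδε : δ ≤ ε) (hε1 : ε < 1)
    (n : ℕ) (α : Fin n → ℝ) (β γ : ℝ) (hγ0 : 0 ≤ γ) (hγ1 : γ ≤ 1)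
    (hβ : β ≥ ((∑ i, (α i) ^ 2) - 1 - γ ^ 2) / (1 - ε)) :
    ∑ i, (1 - α i) ^ 2 + (ε - δ) * β + γ
      ≥ ((n : ℝ) * (ε - δ) / (1 - δ) - (ε - δ) / (1 - ε))
        + (1 - (ε - δ) / (1 - ε)) * γ := by
  have hε' : (0:ℝ) < 1 - ε := by linarith
  have hδ' : (0:ℝ) < 1 - δ := by linarith
  have ht : (0:ℝ) ≤ ε - δ := by linarith
  set t := (ε - δ) / (1 - ε) with htdef
  have ht0 : 0 ≤ t := div_nonneg ht hε'.le
  -- pointwise bound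
  have key : ∀ i : Fin n, (ε - δ) / (1 - δ) ≤ (1 - α i) ^ 2 + t * (α i) ^ 2 := by
    intro i
    rw [div_le_iff₀ hδ', ← sub_nonneg]
    have heq : ((1 - α i) ^ 2 + t * α i ^ 2) * (1 - δ) - (ε - δ)
        = ((1 - δ) * α i - (1 - ε)) ^ 2 / (1 - ε) := by
      rw [htdef]; field_simp; ring
    rw [heq]
    positivity
  have hsum : (n : ℝ) * ((ε - δ) / (1 - δ)) ≤ ∑ i, ((1 - α i) ^ 2 + t * (α i) ^ 2) := by
    calc (n : ℝ) * ((ε - δ) / (1 - δ)) = ∑ _i : Fin n, (ε - δ) / (1 - δ) := by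
          simp [Finset.sum_const, mul_comm]
      _ ≤ _ := Finset.sum_le_sum fun i _ => key i
  have hsum' : (n : ℝ) * ((ε - δ) / (1 - δ)) ≤ ∑ i, (1 - α i) ^ 2 + t * ∑ i, (α i) ^ 2 := by
    rw [Finset.sum_add_distrib, ← Finset.mul_sum] at hsum
    exact hsum
  have hβ' : (ε - δ) * β ≥ t * ((∑ i, (α i) ^ 2) - 1 - γ ^ 2) := by
    have h2 := mul_le_mul_of_nonneg_right hβ ht
    have heq : ((∑ i, (α i) ^ 2) - 1 - γ ^ 2) / (1 - ε) * (ε - δ)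
        = t * ((∑ i, (α i) ^ 2) - 1 - γ ^ 2) := by rw [htdef]; ring
    rw [heq] at h2
    linarith
  have hγ : t * γ ^ 2 ≤ t * γ := by
    have : γ ^ 2 ≤ γ := by nlinarith
    exact mul_le_mul_of_nonneg_left this ht0
  have hnd : (n : ℝ) * (ε - δ) / (1 - δ) = (n : ℝ) * ((ε - δ) / (1 - δ)) := by ring
  rw [hnd]
  nlinarith [hsum', hβ', hγ]
end

section
/- The limit as k → ∞ of max over ε ∈ [0,1/2] of min{ (1−ε)/(2−ε), (k − 1/√(1−ε))·(1 − √(1−ε)) } equals 1/2. -/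
open Filter

theorem stmt_16 :
    Filter.Tendsto
      (fun k : ℕ =>
        sSup ((fun ε : ℝ =>
          min ((1 - ε) / (2 - ε))
            (((k : ℝ) - 1 / Real.sqrt (1 - ε)) * (1 - Real.sqrt (1 - ε)))) ''
          Set.Icc (0 : ℝ) (1 / 2)))
      Filter.atTop (nhds (1 / 2)) := by
  set e : ℕ → ℝ := fun k => 1 - (((k : ℝ) - 1) / k) ^ 2 with he
  -- upper bound on all elements
  have hub : ∀ k : ℕ, ∀ x ∈ ((fun ε : ℝ =>
      min ((1 - ε) / (2 - ε))
        (((k : ℝ) - 1 / Real.sqrt (1 - ε)) * (1 - Real.sqrt (1 - ε)))) ''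
      Set.Icc (0 : ℝ) (1 / 2)), x ≤ 1 / 2 := by
    rintro k x ⟨ε, ⟨hε0, hε1⟩, rfl⟩
    refine le_trans (min_le_left _ _) ?_
    rw [div_le_iff₀ (by linarith)]
    linarith
  -- key computation at ε = e k
  have key : ∀ k : ℕ, 4 ≤ k →
      ((k : ℝ) - 1 / Real.sqrt (1 - e k)) * (1 - Real.sqrt (1 - e k))
        = ((k : ℝ) - 2) / ((k : ℝ) - 1) := by
    intro k hk
    have hk4 : (4 : ℝ) ≤ (k : ℝ) := by exact_mod_cast hk
    have hk0 : (k : ℝ) ≠ 0 := by linarith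
    have hk1 : (k : ℝ) - 1 ≠ 0 := by linarith
    have hsqrt : Real.sqrt (1 - e k) = ((k : ℝ) - 1) / k := by
      have h1 : 1 - e k = (((k : ℝ) - 1) / k) ^ 2 := by simp [he]
      rw [h1, Real.sqrt_sq (div_nonneg (by linarith) (by linarith))]
    rw [hsqrt]
    field_simp
    ring
  have hmem : ∀ k : ℕ, 4 ≤ k → e k ∈ Set.Icc (0 : ℝ) (1 / 2) := by
    intro k hk
    have hk4 : (4 : ℝ) ≤ (k : ℝ) := by exact_mod_cast hk
    have hk0 : (k : ℝ) ≠ 0 := by linarith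
    constructor
    · have : (((k : ℝ) - 1) / k) ^ 2 ≤ 1 := by
        rw [div_pow, div_le_one (by positivity)]
        nlinarith
      simp only [he]; linarith
    · have : (1 : ℝ) / 2 ≤ (((k : ℝ) - 1) / k) ^ 2 := by
        rw [div_pow, le_div_iff₀ (by positivity)]
        nlinarith
      simp only [he]; linarith
  -- tendsto of e to 0
  have hinv : Tendsto (fun k : ℕ => 1 / (k : ℝ)) atTop (nhds 0) :=
    tendsto_one_div_atTop_nhds_zero_nat
  have hq : Tendsto (fun k : ℕ => ((k : ℝ) - 1) / k) atTop (nhds 1) := by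
    have : Tendsto (fun k : ℕ => 1 - 1 / (k : ℝ)) atTop (nhds 1) := by
      simpa using (tendsto_const_nhds.sub hinv)
    refine this.congr' ?_
    filter_upwards [eventually_ge_atTop 1] with k hk
    have hk0 : (k : ℝ) ≠ 0 := by positivity
    field_simp
  have hetend : Tendsto e atTop (nhds 0) := by
    have : Tendsto (fun k : ℕ => 1 - (((k : ℝ) - 1) / k) ^ 2) atTop (nhds (1 - 1 ^ 2)) :=
      tendsto_const_nhds.sub (hq.pow 2)
    simpa [he] using this
  -- lower sequence tends to 1/2
  have hA : Tendsto (fun k : ℕ => (1 - e k) / (2 - e k)) atTop (nhds (1 / 2)) := by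
    have := ((tendsto_const_nhds (x := (1:ℝ))).sub hetend).div
      ((tendsto_const_nhds (x := (2:ℝ))).sub hetend) (by norm_num)
    simpa [Pi.div_def] using this
  have hB : Tendsto (fun k : ℕ => ((k : ℝ) - 2) / ((k : ℝ) - 1)) atTop (nhds 1) := by
    have h1 : Tendsto (fun k : ℕ => (k : ℝ) - 1) atTop atTop :=
      tendsto_atTop_add_const_right _ (-1) tendsto_natCast_atTop_atTop
    have h2 : Tendsto (fun k : ℕ => ((k : ℝ) - 1)⁻¹) atTop (nhds 0) := h1.inv_tendsto_atTop
    have h3 : Tendsto (fun k : ℕ => 1 - ((k : ℝ) - 1)⁻¹) atTop (nhds 1) := by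
      simpa using tendsto_const_nhds.sub h2
    refine h3.congr' ?_
    filter_upwards [eventually_ge_atTop 2] with k hk
    have hk2 : (2 : ℝ) ≤ (k : ℝ) := by exact_mod_cast hk
    have hk1 : (k : ℝ) - 1 ≠ 0 := by linarith
    field_simp
    ring
  have hlow : Tendsto (fun k : ℕ => min ((1 - e k) / (2 - e k)) (((k : ℝ) - 2) / ((k : ℝ) - 1)))
      atTop (nhds (1 / 2)) := by
    have h12 : (1:ℝ)/2 = min ((1:ℝ)/2) 1 := (min_eq_left (by norm_num)).symm
    rw [h12]
    exact hA.min hB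
  refine tendsto_of_tendsto_of_tendsto_of_le_of_le' hlow tendsto_const_nhds ?_ ?_
  · filter_upwards [eventually_ge_atTop 4] with k hk
    have hkey := key k hk
    have hmemk := hmem k hk
    have hin : min ((1 - e k) / (2 - e k)) (((k : ℝ) - 2) / ((k : ℝ) - 1)) ∈
        ((fun ε : ℝ =>
          min ((1 - ε) / (2 - ε))
            (((k : ℝ) - 1 / Real.sqrt (1 - ε)) * (1 - Real.sqrt (1 - ε)))) ''
          Set.Icc (0 : ℝ) (1 / 2)) := by
      refine ⟨e k, hmemk, ?_⟩
      dsimp only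
      rw [hkey]
    exact le_csSup ⟨1 / 2, fun x hx => hub k x hx⟩ hin
  · filter_upwards with k
    exact Real.sSup_le (hub k) (by norm_num)
end
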